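/- In the free group F₂ on α, β, for every integer n ≥ 2, the number of elements of word length exactly n that are not conjugate to any power of α, β, or αβ equals 4·3^r·(3^(r+1) − 2) if n = 2r+2 and 4·3^r·(3^r − 1) if n = 2r+1. -/

import Mathlib

abbrev F2 := FreeGroup (Fin 2)

def α : F2 := FreeGroup.of 0

def β : F2 := FreeGroup.of 1

/-- Number of pseudo-Anosov-type elements (not conjugate to any power of `α`, `β`,
or `αβ`) of word length exactly `n`. -/
noncomputable def pACount (n : ℕ) : ℕ :=
  Nat.card {g : F2 | FreeGroup.norm g = n ∧
    ¬ ∃ (w : F2) (k : ℤ) (γ : F2), γ ∈ ({α, β, α * β} : Set F2) ∧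
      g = w * γ ^ k * w⁻¹}

open FreeGroup List

namespace PA

abbrev Ltr := Fin 2 × Bool

def invL (x : Ltr) : Ltr := (x.1, !x.2)

def otherL (x : Ltr) : Ltr := (x.1 + 1, x.2)

@[simp] lemma invL_invL (x : Ltr) : invL (invL x) = x := by
  simp [invL]

lemma invL_ne (x : Ltr) : invL x ≠ x := by
  revert x; decide

lemma invL_inj : Function.Injective invL := by
  intro a b h; simpa using congrArg invL h

def IsRed (L : List Ltr) : Prop := List.IsChain (fun x y => y ≠ invL x) L

lemma isRed_nil : IsRed [] := List.isChain_nil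

lemma cond_iff (x y : Ltr) : (x.1 = y.1 ∧ x.2 = !y.2) ↔ y = invL x := by
  constructor
  · rintro ⟨h1, h2⟩
    have : x = invL y := Prod.ext h1 h2
    rw [this]; simp
  · rintro rfl; simp [invL]

lemma reduce_eq_self {L : List Ltr} (h : IsRed L) : FreeGroup.reduce L = L := by
  induction L with
  | nil => rfl
  | cons x L ih =>
    have hL : IsRed L := h.tail
    rw [FreeGroup.reduce.cons, ih hL]
    cases L with
    | nil => rfl
    | cons y M =>
      have hxy : y ≠ invL x := List.isChain_cons_cons.mp h |>.1
      show (if x.1 = y.1 ∧ x.2 = !y.2 then M else x :: y :: M) = x :: y :: M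
      rw [if_neg (fun hc => hxy ((cond_iff x y).mp hc))]

lemma isRed_reduce (L : List Ltr) : IsRed (FreeGroup.reduce L) := by
  induction L with
  | nil => exact isRed_nil
  | cons x L ih =>
    rw [FreeGroup.reduce.cons]
    rcases hM : FreeGroup.reduce L with _ | ⟨y, M⟩
    · simp [IsRed]
    · rw [hM] at ih
      show IsRed (if x.1 = y.1 ∧ x.2 = !y.2 then M else x :: y :: M)
      by_cases hc : x.1 = y.1 ∧ x.2 = !y.2
      · rw [if_pos hc]
        exact ih.tail
      · rw [if_neg hc]
        exact List.isChain_cons_cons.mpr ⟨fun he => hc ((cond_iff x y).mpr he), ih⟩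

lemma isRed_toWord (g : F2) : IsRed g.toWord := by
  rw [← FreeGroup.reduce_toWord]; exact isRed_reduce _

lemma toWord_mk_self {L : List Ltr} (h : IsRed L) : (FreeGroup.mk L).toWord = L := by
  rw [FreeGroup.toWord_mk, reduce_eq_self h]

lemma norm_mk_self {L : List Ltr} (h : IsRed L) : FreeGroup.norm (FreeGroup.mk L) = L.length := by
  rw [FreeGroup.norm, toWord_mk_self h]

lemma invRev_eq (L : List Ltr) :
    FreeGroup.invRev L = (L.map invL).reverse := rfl

lemma isRed_invRev {L : List Ltr} (h : IsRed L) : IsRed (FreeGroup.invRev L) := by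
  rw [invRev_eq, IsRed, List.isChain_reverse, List.isChain_map]
  refine List.IsChain.imp ?_ h
  intro a b hab he
  exact hab (by simpa using he.symm)

lemma isRed_append_left {L M : List Ltr} (h : IsRed (L ++ M)) : IsRed L :=
  (List.isChain_append.mp h).1

lemma isRed_append_right {L M : List Ltr} (h : IsRed (L ++ M)) : IsRed M :=
  (List.isChain_append.mp h).2.1

@[simp] lemma invRev_getLast? (L : List Ltr) :
    (FreeGroup.invRev L).head? = L.getLast?.map invL := by
  rw [invRev_eq, List.head?_reverse, List.getLast?_map]

def altW (a : Ltr) : ℕ → List Ltr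
  | 0 => []
  | n+1 => a :: altW (otherL a) n

@[simp] lemma otherL_otherL (a : Ltr) : otherL (otherL a) = a := by
  revert a; decide

lemma otherL_invL (a : Ltr) : otherL (invL a) = invL (otherL a) := by
  revert a; decide

lemma otherL_ne_invL (a : Ltr) : otherL a ≠ invL a := by revert a; decide

lemma invL_otherL_ne (a b : Ltr) : invL (otherL a) ≠ a := by revert a b; decide

@[simp] lemma altW_length (a : Ltr) (n : ℕ) : (altW a n).length = n := by
  induction n generalizing a with
  | zero => rfl
  | succ n ih => simp [altW, ih]

lemma altW_two_step (a : Ltr) (n : ℕ) :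
    altW a (n + 2) = a :: otherL a :: altW a n := by
  show a :: altW (otherL a) (n+1) = _
  rw [altW]
  simp

lemma isRed_altW (a : Ltr) (n : ℕ) : IsRed (altW a n) := by
  induction n generalizing a with
  | zero => exact isRed_nil
  | succ n ih =>
    rw [altW, IsRed, List.isChain_cons]
    refine ⟨?_, ih (otherL a)⟩
    intro y hy
    cases n with
    | zero => simp [altW] at hy
    | succ m =>
      rw [altW] at hy
      simp only [List.head?_cons, Option.mem_def, Option.some.injEq] at hy
      subst hy
      exact otherL_ne_invL a

lemma altW_head? (a : Ltr) (n : ℕ) (h : 1 ≤ n) : (altW a n).head? = some a := by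
  cases n with
  | zero => omega
  | succ m => rfl

lemma altW_concat (n : ℕ) : ∀ a : Ltr,
    altW a (n + 1) = altW a n ++ [if n % 2 = 0 then a else otherL a] := by
  induction n with
  | zero => intro a; simp [altW]
  | succ n ih =>
    intro a
    rw [altW, ih (otherL a), altW]
    rcases Nat.even_or_odd n with h | h
    · have h0 : n % 2 = 0 := Nat.even_iff.mp h
      have h1 : (n+1) % 2 = 1 := by omega
      simp [h0, h1]
    · have h0 : n % 2 = 1 := Nat.odd_iff.mp h
      have h1 : (n+1) % 2 = 0 := by omega
      simp [h0, h1]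

lemma altW_getLast?_even (a : Ltr) (j : ℕ) (h : 1 ≤ j) :
    (altW a (2 * j)).getLast? = some (otherL a) := by
  obtain ⟨m, rfl⟩ : ∃ m, j = m + 1 := ⟨j - 1, by omega⟩
  have : 2 * (m + 1) = (2 * m + 1) + 1 := by ring
  rw [this, altW_concat]
  have : (2 * m + 1) % 2 = 1 := by omega
  simp [this]

def coreW (a : Ltr) (t : Bool) (ℓ : ℕ) : List Ltr :=
  if t then altW a ℓ else List.replicate ℓ a

def coreLast (a : Ltr) (t : Bool) : Ltr := if t then otherL a else a

@[simp] lemma coreW_length (a : Ltr) (t : Bool) (ℓ : ℕ) : (coreW a t ℓ).length = ℓ := by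
  cases t <;> simp [coreW]

lemma isRed_coreW (a : Ltr) (t : Bool) (ℓ : ℕ) : IsRed (coreW a t ℓ) := by
  cases t
  · simp only [coreW, if_neg Bool.false_ne_true]
    induction ℓ with
    | zero => exact isRed_nil
    | succ n ih =>
      rw [List.replicate_succ, IsRed, List.isChain_cons]
      refine ⟨?_, ih⟩
      intro y hy
      cases n with
      | zero => simp at hy
      | succ m =>
        rw [List.replicate_succ] at hy
        simp only [List.head?_cons, Option.mem_def, Option.some.injEq] at hy
        subst hy
        exact fun h => invL_ne a h.symm
  · exact isRed_altW a ℓ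

lemma coreW_head? (a : Ltr) (t : Bool) (ℓ : ℕ) (h : 1 ≤ ℓ) :
    (coreW a t ℓ).head? = some a := by
  cases t
  · obtain ⟨m, rfl⟩ : ∃ m, ℓ = m + 1 := ⟨ℓ - 1, by omega⟩
    simp [coreW, List.replicate_succ]
  · exact altW_head? a ℓ h

lemma coreW_getLast? (a : Ltr) (t : Bool) (ℓ : ℕ) (h : 1 ≤ ℓ) (he : t = true → Even ℓ) :
    (coreW a t ℓ).getLast? = some (coreLast a t) := by
  cases t
  · simp only [coreW, if_neg Bool.false_ne_true, coreLast]
    rw [List.getLast?_replicate]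
    simp only [if_neg (by omega : ¬ ℓ = 0)]
  · obtain ⟨j, rfl⟩ : ∃ j, ℓ = 2 * j := by
      obtain ⟨j, hj⟩ := he rfl; exact ⟨j, by omega⟩
    exact altW_getLast?_even a j (by omega)

lemma coreLast_ne_invL (a : Ltr) (t : Bool) : coreLast a t ≠ invL a := by
  revert a t; decide
/-! ### Group identities for core words -/

lemma conj_zpow (w g : F2) (k : ℤ) : (w * g * w⁻¹) ^ k = w * g ^ k * w⁻¹ := by
  rw [← MulAut.conj_apply, ← map_zpow, MulAut.conj_apply]

lemma mk_tt (i : Fin 2) : FreeGroup.mk [(i, true)] = (FreeGroup.of i : F2) := rfl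

lemma invRev_replicate (i : Fin 2) (b : Bool) (n : ℕ) :
    FreeGroup.invRev (List.replicate n (i, b)) = List.replicate n (i, !b) := by
  simp [invRev_eq, invL]

lemma mk_replicate_t (i : Fin 2) (n : ℕ) :
    FreeGroup.mk (List.replicate n (i, true)) = (FreeGroup.of i : F2) ^ n := by
  rw [← FreeGroup.toWord_of_pow, FreeGroup.mk_toWord]

lemma mk_replicate_f (i : Fin 2) (n : ℕ) :
    FreeGroup.mk (List.replicate n (i, false)) = ((FreeGroup.of i : F2) ^ n)⁻¹ := by
  rw [← mk_replicate_t, FreeGroup.inv_mk, invRev_replicate]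
  norm_num

lemma mk_altW (a : Ltr) (j : ℕ) :
    FreeGroup.mk (altW a (2 * j)) = ((FreeGroup.mk [a] * FreeGroup.mk [otherL a] : F2)) ^ j := by
  induction j with
  | zero => simp [altW, FreeGroup.one_eq_mk]
  | succ j ih =>
    have h2 : 2 * (j + 1) = 2 * j + 2 := by ring
    rw [h2, altW_two_step]
    have : (a :: otherL a :: altW a (2 * j)) = [a] ++ [otherL a] ++ altW a (2 * j) := rfl
    rw [this, ← FreeGroup.mul_mk, ← FreeGroup.mul_mk, ih, pow_succ']

lemma map_invL_altW : ∀ (n : ℕ) (a : Ltr), (altW a n).map invL = altW (invL a) n := by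
  intro n
  induction n with
  | zero => intro a; rfl
  | succ n ih =>
    intro a
    rw [altW, altW, List.map_cons, ih (otherL a), otherL_invL]

lemma reverse_altW_even : ∀ (j : ℕ) (a : Ltr), (altW a (2 * j)).reverse = altW (otherL a) (2 * j) := by
  intro j
  induction j with
  | zero => intro a; rfl
  | succ j ih =>
    intro a
    have h2 : 2 * (j + 1) = 2 * j + 2 := by ring
    rw [h2, altW_two_step, List.reverse_cons, List.reverse_cons, ih a]
    have e1 : altW (otherL a) (2 * j + 1) = altW (otherL a) (2 * j) ++ [otherL a] := by
      rw [altW_concat]; simp [Nat.mul_mod_right]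
    have e2 : altW (otherL a) (2 * j + 2) = altW (otherL a) (2 * j + 1) ++ [a] := by
      rw [altW_concat]
      have : (2 * j + 1) % 2 = 1 := by omega
      simp [this]
    rw [e2, e1]

lemma invRev_altW (a : Ltr) (j : ℕ) :
    FreeGroup.invRev (altW a (2 * j)) = altW (invL (otherL a)) (2 * j) := by
  rw [invRev_eq, map_invL_altW, reverse_altW_even, otherL_invL]

/-- every word of shape `U ++ C ++ invRev U` is reduced, given junction conditions -/
lemma isRed_sandwich (U C : List Ltr) (hU : IsRed U) (hC : IsRed C)
    (hcond : ∀ x ∈ U.getLast?, ∀ c1 ∈ C.head?, ∀ c2 ∈ C.getLast?, x ≠ invL c1 ∧ x ≠ c2)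
    (hne : C ≠ []) :
    IsRed (U ++ C ++ FreeGroup.invRev U) := by
  obtain ⟨c1, hc1⟩ : ∃ c1, C.head? = some c1 := by
    cases C with
    | nil => exact absurd rfl hne
    | cons c C => exact ⟨c, rfl⟩
  obtain ⟨c2, hc2⟩ : ∃ c2, C.getLast? = some c2 := by
    rcases List.getLast?_isSome.mpr hne |> Option.isSome_iff_exists.mp with ⟨c2, h⟩
    exact ⟨c2, h⟩
  rw [IsRed, List.append_assoc, List.isChain_append]
  refine ⟨hU, ?_, ?_⟩
  · rw [List.isChain_append]
    refine ⟨hC, isRed_invRev hU, ?_⟩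
    intro c hc y hy
    rw [invRev_getLast?] at hy
    simp only [Option.mem_def, Option.map_eq_some_iff] at hy
    obtain ⟨x, hx, rfl⟩ := hy
    have h22 : c2 = c := by rw [Option.mem_def, hc2, Option.some.injEq] at hc; exact hc
    subst h22
    intro he
    have hx2 : x ≠ c2 := (hcond x hx c1 hc1 c2 hc2).2
    exact hx2 (invL_inj (by simpa using he))
  · intro x hx y hy
    rw [List.head?_append_of_ne_nil C hne, hc1, Option.mem_def, Option.some.injEq] at hy
    subst hy
    have hx1 : x ≠ invL c1 := (hcond x hx c1 hc1 c2 hc2).1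
    intro he
    exact hx1 (by simpa using congrArg invL he.symm)
/-! ### Stripping conjugators -/

lemma exists_last_decomp (w : F2) (x : Ltr) (hx : w.toWord.getLast? = some x) :
    ∃ u : F2, w = u * FreeGroup.mk [x] ∧ u.toWord = w.toWord.dropLast ∧
      FreeGroup.norm u + 1 = FreeGroup.norm w := by
  have hU : IsRed w.toWord := isRed_toWord w
  have hne : w.toWord ≠ [] := by
    intro h; rw [h] at hx; simp at hx
  have hgl : w.toWord.getLast hne = x := by
    have := List.getLast?_eq_getLast hne
    rw [hx] at this
    exact (Option.some.injEq _ _).mp this.symm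
  have hsplit : w.toWord.dropLast ++ [x] = w.toWord := by
    rw [← hgl]; exact List.dropLast_append_getLast hne
  have hred : IsRed w.toWord.dropLast := by
    apply isRed_append_left (M := [x])
    rw [hsplit]; exact hU
  refine ⟨FreeGroup.mk w.toWord.dropLast, ?_, toWord_mk_self hred, ?_⟩
  · conv_lhs => rw [← FreeGroup.mk_toWord (x := w), ← hsplit]
    rw [← FreeGroup.mul_mk]
  · rw [norm_mk_self hred, FreeGroup.norm]
    have : w.toWord.length ≠ 0 := fun h => hne (List.length_eq_zero_iff.mp h)
    rw [List.length_dropLast]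
    omega

lemma conj_mul_swap (u c g g' : F2) (h : c * g * c⁻¹ = g') :
    (u * c) * g * (u * c)⁻¹ = u * g' * u⁻¹ := by
  rw [← h]; group

lemma mk_ff (i : Fin 2) : FreeGroup.mk [(i, false)] = (FreeGroup.of i : F2)⁻¹ := by
  simpa using mk_replicate_f i 1

lemma of0 : (FreeGroup.of 0 : F2) = α := rfl

lemma of1 : (FreeGroup.of 1 : F2) = β := rfl

lemma strip_const (i : Fin 2) : ∀ (n : ℕ) (w : F2), FreeGroup.norm w ≤ n →
    ∃ u : F2, (∀ x ∈ u.toWord.getLast?, x.1 ≠ i) ∧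
      ∀ k : ℤ, w * (FreeGroup.of i : F2) ^ k * w⁻¹ = u * (FreeGroup.of i : F2) ^ k * u⁻¹ := by
  intro n
  induction n with
  | zero =>
    intro w hw
    have : w = 1 := FreeGroup.norm_eq_zero.mp (Nat.le_zero.mp hw)
    subst this
    refine ⟨1, ?_, fun k => rfl⟩
    rw [FreeGroup.toWord_one]
    simp
  | succ n ih =>
    intro w hw
    by_cases hc : ∀ x ∈ w.toWord.getLast?, x.1 ≠ i
    · exact ⟨w, hc, fun k => rfl⟩
    · push_neg at hc
      obtain ⟨x, hx, hxi⟩ := hc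
      rw [Option.mem_def] at hx
      obtain ⟨u, hwu, _, hnorm⟩ := exists_last_decomp w x hx
      obtain ⟨v, hv, hvk⟩ := ih u (by omega)
      refine ⟨v, hv, fun k => ?_⟩
      rw [hwu, ← hvk k]
      obtain ⟨xi, xb⟩ := x
      simp only at hxi
      subst hxi
      cases xb
      · rw [mk_ff]
        exact conj_mul_swap _ _ _ _ (by group)
      · rw [mk_tt]
        exact conj_mul_swap _ _ _ _ (by group)

def condAB (u : F2) : Prop :=
  ∀ x ∈ u.toWord.getLast?, x ≠ ((0 : Fin 2), false) ∧ x ≠ ((1 : Fin 2), true)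

def condBA (u : F2) : Prop :=
  ∀ x ∈ u.toWord.getLast?, x ≠ ((1 : Fin 2), false) ∧ x ≠ ((0 : Fin 2), true)

lemma strip_alt : ∀ (n : ℕ) (w : F2), FreeGroup.norm w ≤ n → ∀ c : F2, (c = α*β ∨ c = β*α) →
    ∃ u c', ((c' = α*β ∧ condAB u) ∨ (c' = β*α ∧ condBA u)) ∧
      ∀ k : ℤ, w * c ^ k * w⁻¹ = u * c' ^ k * u⁻¹ := by
  intro n
  induction n with
  | zero =>
    intro w hw c hc
    have : w = 1 := FreeGroup.norm_eq_zero.mp (Nat.le_zero.mp hw)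
    subst this
    have hvac : (1 : F2).toWord.getLast? = none := by rw [FreeGroup.toWord_one]; rfl
    rcases hc with rfl | rfl
    · exact ⟨1, α*β, Or.inl ⟨rfl, by rw [condAB, hvac]; simp⟩, fun k => rfl⟩
    · exact ⟨1, β*α, Or.inr ⟨rfl, by rw [condBA, hvac]; simp⟩, fun k => rfl⟩
  | succ n ih =>
    intro w hw c hc
    rcases hc with rfl | rfl
    · by_cases hgood : condAB w
      · exact ⟨w, α*β, Or.inl ⟨rfl, hgood⟩, fun k => rfl⟩
      · rw [condAB] at hgood
        push_neg at hgood
        obtain ⟨x, hx, hxor⟩ := hgood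
        rw [Option.mem_def] at hx
        obtain ⟨u, hwu, _, hnorm⟩ := exists_last_decomp w x hx
        obtain ⟨v, c', hside, hvk⟩ := ih u (by omega) (β*α) (Or.inr rfl)
        refine ⟨v, c', hside, fun k => ?_⟩
        rw [hwu, ← hvk k]
        have hx2 : x = ((0:Fin 2), false) ∨ x = ((1:Fin 2), true) := by tauto
        rcases hx2 with rfl | rfl
        · rw [mk_ff, of0]
          refine conj_mul_swap _ _ _ _ ?_
          show α⁻¹ * (α*β)^k * α⁻¹⁻¹ = (β*α)^k
          rw [← conj_zpow]
          norm_num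
        · rw [mk_tt, of1]
          refine conj_mul_swap _ _ _ _ ?_
          show β * (α*β)^k * β⁻¹ = (β*α)^k
          rw [← conj_zpow]
          group
    · by_cases hgood : condBA w
      · exact ⟨w, β*α, Or.inr ⟨rfl, hgood⟩, fun k => rfl⟩
      · rw [condBA] at hgood
        push_neg at hgood
        obtain ⟨x, hx, hxor⟩ := hgood
        rw [Option.mem_def] at hx
        obtain ⟨u, hwu, _, hnorm⟩ := exists_last_decomp w x hx
        obtain ⟨v, c', hside, hvk⟩ := ih u (by omega) (α*β) (Or.inl rfl)
        refine ⟨v, c', hside, fun k => ?_⟩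
        rw [hwu, ← hvk k]
        have hx2 : x = ((1:Fin 2), false) ∨ x = ((0:Fin 2), true) := by tauto
        rcases hx2 with rfl | rfl
        · rw [mk_ff, of1]
          refine conj_mul_swap _ _ _ _ ?_
          show β⁻¹ * (β*α)^k * β⁻¹⁻¹ = (α*β)^k
          rw [← conj_zpow]
          norm_num
        · rw [mk_tt, of0]
          refine conj_mul_swap _ _ _ _ ?_
          show α * (β*α)^k * α⁻¹ = (α*β)^k
          rw [← conj_zpow]
          group
/-! ### Characterization of bad elements -/

def Bad (g : F2) : Prop :=
  ∃ (w : F2) (k : ℤ) (γ : F2), γ ∈ ({α, β, α * β} : Set F2) ∧ g = w * γ ^ k * w⁻¹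

def Decomp (g : F2) : Prop :=
  ∃ (a : Ltr) (t : Bool) (ℓ : ℕ) (U : List Ltr), 1 ≤ ℓ ∧ (t = true → Even ℓ) ∧ IsRed U ∧
    (∀ x ∈ U.getLast?, x ≠ invL a ∧ x ≠ coreLast a t) ∧
    g.toWord = U ++ coreW a t ℓ ++ FreeGroup.invRev U

lemma coreW_ne_nil (a : Ltr) (t : Bool) (ℓ : ℕ) (hl : 1 ≤ ℓ) : coreW a t ℓ ≠ [] := by
  intro h
  have := coreW_length a t ℓ
  rw [h] at this
  simp at this
  omega

lemma toWord_sandwich (U : List Ltr) (a : Ltr) (t : Bool) (ℓ : ℕ) (hU : IsRed U)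
    (hl : 1 ≤ ℓ) (he : t = true → Even ℓ)
    (hcond : ∀ x ∈ U.getLast?, x ≠ invL a ∧ x ≠ coreLast a t) :
    (FreeGroup.mk U * FreeGroup.mk (coreW a t ℓ) * (FreeGroup.mk U)⁻¹).toWord
      = U ++ coreW a t ℓ ++ FreeGroup.invRev U := by
  rw [FreeGroup.inv_mk, FreeGroup.mul_mk, FreeGroup.mul_mk]
  apply toWord_mk_self
  apply isRed_sandwich U _ hU (isRed_coreW a t ℓ) _ (coreW_ne_nil a t ℓ hl)
  intro x hx c1 hc1 c2 hc2
  rw [coreW_head? a t ℓ hl, Option.mem_def, Option.some.injEq] at hc1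
  rw [coreW_getLast? a t ℓ hl he, Option.mem_def, Option.some.injEq] at hc2
  subst hc1; subst hc2
  exact hcond x hx

lemma mk_eq_sandwich {g : F2} {U C : List Ltr} (h : g.toWord = U ++ C ++ FreeGroup.invRev U) :
    g = FreeGroup.mk U * FreeGroup.mk C * (FreeGroup.mk U)⁻¹ := by
  rw [FreeGroup.inv_mk, FreeGroup.mul_mk, FreeGroup.mul_mk, ← h, FreeGroup.mk_toWord]

lemma mem_three (γ : F2) (h : γ = α ∨ γ = β ∨ γ = α * β) : γ ∈ ({α, β, α * β} : Set F2) := by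
  rcases h with rfl | rfl | rfl
  · exact Set.mem_insert _ _
  · exact Set.mem_insert_of_mem _ (Set.mem_insert _ _)
  · exact Set.mem_insert_of_mem _ (Set.mem_insert_of_mem _ rfl)

lemma otherL_0t : otherL ((0 : Fin 2), true) = ((1 : Fin 2), true) := by decide
lemma otherL_1t : otherL ((1 : Fin 2), true) = ((0 : Fin 2), true) := by decide
lemma otherL_0f : otherL ((0 : Fin 2), false) = ((1 : Fin 2), false) := by decide
lemma otherL_1f : otherL ((1 : Fin 2), false) = ((0 : Fin 2), false) := by decide

lemma mk_alt_00 (j : ℕ) : FreeGroup.mk (altW ((0:Fin 2), true) (2*j)) = (α * β) ^ j := by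
  rw [mk_altW, otherL_0t, mk_tt, mk_tt, of0, of1]

lemma mk_alt_10 (j : ℕ) : FreeGroup.mk (altW ((1:Fin 2), true) (2*j)) = (β * α) ^ j := by
  rw [mk_altW, otherL_1t, mk_tt, mk_tt, of0, of1]

lemma mk_alt_1f (j : ℕ) : FreeGroup.mk (altW ((1:Fin 2), false) (2*j)) = ((α * β) ^ j)⁻¹ := by
  rw [mk_altW, otherL_1f, mk_ff, mk_ff, of0, of1, ← mul_inv_rev, inv_pow]

lemma mk_alt_0f (j : ℕ) : FreeGroup.mk (altW ((0:Fin 2), false) (2*j)) = ((β * α) ^ j)⁻¹ := by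
  rw [mk_altW, otherL_0f, mk_ff, mk_ff, of0, of1, ← mul_inv_rev, inv_pow]

lemma ba_conj : (β * α : F2) = β * (α * β) * β⁻¹ := by group

lemma bad_of_decomp {g : F2} (h : Decomp g) : Bad g := by
  obtain ⟨a, t, ℓ, U, hl, he, _hU, _hcond, htw⟩ := h
  have hg := mk_eq_sandwich htw
  obtain ⟨i, b⟩ := a
  cases t with
  | false =>
    have hrep : coreW (i, b) false ℓ = List.replicate ℓ (i, b) := by
      simp [coreW]
    rw [hrep] at hg
    have hγ : (FreeGroup.of i : F2) = α ∨ (FreeGroup.of i : F2) = β := by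
      fin_cases i
      · exact Or.inl rfl
      · exact Or.inr rfl
    cases b with
    | true =>
      refine ⟨FreeGroup.mk U, (ℓ : ℤ), FreeGroup.of i, mem_three _ (by tauto), ?_⟩
      rw [hg, mk_replicate_t, zpow_natCast]
    | false =>
      refine ⟨FreeGroup.mk U, -(ℓ : ℤ), FreeGroup.of i, mem_three _ (by tauto), ?_⟩
      rw [hg, mk_replicate_f, zpow_neg, zpow_natCast]
  | true =>
    obtain ⟨j, hj⟩ := he rfl
    have hj2 : ℓ = 2 * j := by omega
    subst hj2
    rw [show coreW (i, b) true (2 * j) = altW (i, b) (2 * j) from by simp [coreW]] at hg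
    have hi : i = 0 ∨ i = 1 := by fin_cases i <;> decide
    rcases hi with rfl | rfl <;> cases b
    · -- (0, false) : (βα)^(-j)
      rw [mk_alt_0f] at hg
      refine ⟨FreeGroup.mk U * β, -(j:ℤ), α * β, mem_three _ (by tauto), ?_⟩
      rw [hg, zpow_neg, zpow_natCast, ba_conj, conj_pow]
      group
    · -- (0, true) : (αβ)^j
      rw [mk_alt_00] at hg
      refine ⟨FreeGroup.mk U, (j:ℤ), α * β, mem_three _ (by tauto), ?_⟩
      rw [hg, zpow_natCast]
    · -- (1, false) : (αβ)^(-j)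
      rw [mk_alt_1f] at hg
      refine ⟨FreeGroup.mk U, -(j:ℤ), α * β, mem_three _ (by tauto), ?_⟩
      rw [hg, zpow_neg, zpow_natCast]
    · -- (1, true) : (βα)^j
      rw [mk_alt_10] at hg
      refine ⟨FreeGroup.mk U * β, (j:ℤ), α * β, mem_three _ (by tauto), ?_⟩
      rw [hg, zpow_natCast, ba_conj, conj_pow]
      group

lemma decomp_of_bad {g : F2} (hg : g ≠ 1) (h : Bad g) : Decomp g := by
  obtain ⟨w, k, γ, hγ, rfl⟩ := h
  have hk : k ≠ 0 := by
    rintro rfl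
    simp at hg
  simp only [Set.mem_insert_iff, Set.mem_singleton_iff] at hγ
  have key : ∀ (u : F2) (a : Ltr) (t : Bool) (ℓ : ℕ), 1 ≤ ℓ → (t = true → Even ℓ) →
      (∀ x ∈ u.toWord.getLast?, x ≠ invL a ∧ x ≠ coreLast a t) →
      w * γ ^ k * w⁻¹ = FreeGroup.mk u.toWord * FreeGroup.mk (coreW a t ℓ) * (FreeGroup.mk u.toWord)⁻¹ →
      Decomp (w * γ ^ k * w⁻¹) := by
    intro u a t ℓ hl he hcond heq
    refine ⟨a, t, ℓ, u.toWord, hl, he, isRed_toWord u, hcond, ?_⟩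
    rw [heq, toWord_sandwich u.toWord a t ℓ (isRed_toWord u) hl he hcond]
  rcases hγ with rfl | rfl | rfl
  · -- γ = α
    obtain ⟨u, hcond, hconj⟩ := strip_const 0 (FreeGroup.norm w) w le_rfl
    rcases lt_or_gt_of_ne hk with hneg | hpos
    · refine key u ((0:Fin 2), false) false (-k).toNat (by omega) (by simp) ?_ ?_
      · intro x hx
        have := hcond x hx
        constructor <;> (intro hh; apply this; rw [hh]; rfl)
      · have hcore : FreeGroup.mk (coreW ((0:Fin 2), false) false (-k).toNat)
            = ((FreeGroup.of (0:Fin 2) : F2)) ^ k := by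
          have : coreW ((0:Fin 2), false) false (-k).toNat = List.replicate (-k).toNat ((0:Fin 2), false) := by
            simp [coreW]
          rw [this, mk_replicate_f]
          rw [← zpow_natCast, Int.toNat_of_nonneg (by omega), ← zpow_neg]
          norm_num
        rw [← of0, hconj k, hcore, FreeGroup.mk_toWord]
    · refine key u ((0:Fin 2), true) false k.toNat (by omega) (by simp) ?_ ?_
      · intro x hx
        have := hcond x hx
        constructor <;> (intro hh; apply this; rw [hh]; rfl)
      · have hcore : FreeGroup.mk (coreW ((0:Fin 2), true) false k.toNat)
            = ((FreeGroup.of (0:Fin 2) : F2)) ^ k := by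
          have : coreW ((0:Fin 2), true) false k.toNat = List.replicate k.toNat ((0:Fin 2), true) := by
            simp [coreW]
          rw [this, mk_replicate_t, ← zpow_natCast, Int.toNat_of_nonneg (by omega)]
        rw [← of0, hconj k, hcore, FreeGroup.mk_toWord]
  · -- γ = β
    obtain ⟨u, hcond, hconj⟩ := strip_const 1 (FreeGroup.norm w) w le_rfl
    rcases lt_or_gt_of_ne hk with hneg | hpos
    · refine key u ((1:Fin 2), false) false (-k).toNat (by omega) (by simp) ?_ ?_
      · intro x hx
        have := hcond x hx
        constructor <;> (intro hh; apply this; rw [hh]; rfl)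
      · have hcore : FreeGroup.mk (coreW ((1:Fin 2), false) false (-k).toNat)
            = ((FreeGroup.of (1:Fin 2) : F2)) ^ k := by
          have : coreW ((1:Fin 2), false) false (-k).toNat = List.replicate (-k).toNat ((1:Fin 2), false) := by
            simp [coreW]
          rw [this, mk_replicate_f]
          rw [← zpow_natCast, Int.toNat_of_nonneg (by omega), ← zpow_neg]
          norm_num
        rw [← of1, hconj k, hcore, FreeGroup.mk_toWord]
    · refine key u ((1:Fin 2), true) false k.toNat (by omega) (by simp) ?_ ?_
      · intro x hx
        have := hcond x hx
        constructor <;> (intro hh; apply this; rw [hh]; rfl)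
      · have hcore : FreeGroup.mk (coreW ((1:Fin 2), true) false k.toNat)
            = ((FreeGroup.of (1:Fin 2) : F2)) ^ k := by
          have : coreW ((1:Fin 2), true) false k.toNat = List.replicate k.toNat ((1:Fin 2), true) := by
            simp [coreW]
          rw [this, mk_replicate_t, ← zpow_natCast, Int.toNat_of_nonneg (by omega)]
        rw [← of1, hconj k, hcore, FreeGroup.mk_toWord]
  · -- γ = α * β
    obtain ⟨u, c', hside, hconj⟩ := strip_alt (FreeGroup.norm w) w le_rfl (α*β) (Or.inl rfl)
    rcases hside with ⟨rfl, hcond⟩ | ⟨rfl, hcond⟩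
    · -- c' = αβ
      rcases lt_or_gt_of_ne hk with hneg | hpos
      · -- core altW (1,false)
        refine key u ((1:Fin 2), false) true (2 * (-k).toNat) (by omega) (fun _ => ⟨_, (two_mul _)⟩) ?_ ?_
        · intro x hx
          have h2 := hcond x hx
          rw [coreLast]
          constructor <;> (intro hh; rw [hh] at h2; revert h2; decide)
        · have hcore : FreeGroup.mk (coreW ((1:Fin 2), false) true (2 * (-k).toNat))
              = (α * β : F2) ^ k := by
            have : coreW ((1:Fin 2), false) true (2 * (-k).toNat) = altW ((1:Fin 2), false) (2 * (-k).toNat) := by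
              simp [coreW]
            rw [this, mk_alt_1f, ← zpow_natCast, Int.toNat_of_nonneg (by omega), ← zpow_neg]
            norm_num
          rw [hconj k, hcore, FreeGroup.mk_toWord]
      · refine key u ((0:Fin 2), true) true (2 * k.toNat) (by omega) (fun _ => ⟨_, (two_mul _)⟩) ?_ ?_
        · intro x hx
          have h2 := hcond x hx
          rw [coreLast]
          constructor <;> (intro hh; rw [hh] at h2; revert h2; decide)
        · have hcore : FreeGroup.mk (coreW ((0:Fin 2), true) true (2 * k.toNat))
              = (α * β : F2) ^ k := by
            have : coreW ((0:Fin 2), true) true (2 * k.toNat) = altW ((0:Fin 2), true) (2 * k.toNat) := by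
              simp [coreW]
            rw [this, mk_alt_00, ← zpow_natCast, Int.toNat_of_nonneg (by omega)]
          rw [hconj k, hcore, FreeGroup.mk_toWord]
    · -- c' = βα
      rcases lt_or_gt_of_ne hk with hneg | hpos
      · refine key u ((0:Fin 2), false) true (2 * (-k).toNat) (by omega) (fun _ => ⟨_, (two_mul _)⟩) ?_ ?_
        · intro x hx
          have h2 := hcond x hx
          rw [coreLast]
          constructor <;> (intro hh; rw [hh] at h2; revert h2; decide)
        · have hcore : FreeGroup.mk (coreW ((0:Fin 2), false) true (2 * (-k).toNat))
              = (β * α : F2) ^ k := by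
            have : coreW ((0:Fin 2), false) true (2 * (-k).toNat) = altW ((0:Fin 2), false) (2 * (-k).toNat) := by
              simp [coreW]
            rw [this, mk_alt_0f, ← zpow_natCast, Int.toNat_of_nonneg (by omega), ← zpow_neg]
            norm_num
          rw [hconj k, hcore, FreeGroup.mk_toWord]
      · refine key u ((1:Fin 2), true) true (2 * k.toNat) (by omega) (fun _ => ⟨_, (two_mul _)⟩) ?_ ?_
        · intro x hx
          have h2 := hcond x hx
          rw [coreLast]
          constructor <;> (intro hh; rw [hh] at h2; revert h2; decide)
        · have hcore : FreeGroup.mk (coreW ((1:Fin 2), true) true (2 * k.toNat))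
              = (β * α : F2) ^ k := by
            have : coreW ((1:Fin 2), true) true (2 * k.toNat) = altW ((1:Fin 2), true) (2 * k.toNat) := by
              simp [coreW]
            rw [this, mk_alt_10, ← zpow_natCast, Int.toNat_of_nonneg (by omega)]
          rw [hconj k, hcore, FreeGroup.mk_toWord]
/-! ### Counting reduced words -/

def redF : ℕ → Finset (List Ltr)
  | 0 => {[]}
  | n+1 => (((Finset.univ : Finset Ltr) ×ˢ redF n).filter
      (fun p => p.2.head? ≠ some (invL p.1))).image fun p => p.1 :: p.2

lemma mem_redF : ∀ n (L : List Ltr), L ∈ redF n ↔ IsRed L ∧ L.length = n := by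
  intro n
  induction n with
  | zero =>
    intro L
    simp only [redF, Finset.mem_singleton]
    constructor
    · rintro rfl; exact ⟨isRed_nil, rfl⟩
    · rintro ⟨_, h⟩; exact List.length_eq_zero_iff.mp h
  | succ n ih =>
    intro L
    simp only [redF, Finset.mem_image, Finset.mem_filter, Finset.mem_product]
    constructor
    · rintro ⟨⟨x, M⟩, ⟨⟨-, hM⟩, hh⟩, rfl⟩
      obtain ⟨hMr, hMl⟩ := ih M |>.mp hM
      refine ⟨List.isChain_cons.mpr ⟨?_, hMr⟩, by simp [hMl]⟩
      intro y hy he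
      rw [Option.mem_def] at hy
      exact hh (by rw [hy, he])
    · rintro ⟨hr, hl⟩
      cases L with
      | nil => simp at hl
      | cons x M =>
        have hcc := List.isChain_cons.mp hr
        refine ⟨(x, M), ⟨⟨Finset.mem_univ _, (ih M).mpr ⟨hcc.2, by simpa using hl⟩⟩, ?_⟩, rfl⟩
        intro hh
        cases M with
        | nil => simp at hh
        | cons y M' =>
          simp only [List.head?_cons, Option.some.injEq] at hh
          exact hcc.1 y rfl hh

def redFH (x : Ltr) (n : ℕ) : Finset (List Ltr) := (redF n).filter (fun L => L.head? = some x)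

lemma redF_eq_biUnion (n : ℕ) :
    redF (n+1) = Finset.univ.biUnion (fun x => redFH x (n+1)) := by
  ext L
  simp only [Finset.mem_biUnion, Finset.mem_univ, true_and, redFH, Finset.mem_filter]
  constructor
  · intro hL
    have hlen := (mem_redF _ L |>.mp hL).2
    cases L with
    | nil => simp at hlen
    | cons x M => exact ⟨x, hL, rfl⟩
  · rintro ⟨x, hL, -⟩; exact hL

lemma card_redF_succ (n : ℕ) :
    (redF (n+1)).card = ∑ x : Ltr, (redFH x (n+1)).card := by
  rw [redF_eq_biUnion n]
  rw [Finset.card_biUnion]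
  intro x _ y _ hxy
  simp only [Finset.disjoint_left, redFH, Finset.mem_filter]
  rintro L ⟨-, h1⟩ ⟨-, h2⟩
  rw [h1] at h2
  exact hxy (by simpa using h2)

lemma redFH_one (x : Ltr) : redFH x 1 = {[x]} := by
  ext L
  simp only [redFH, Finset.mem_filter, mem_redF, Finset.mem_singleton]
  constructor
  · rintro ⟨⟨hr, hl⟩, hh⟩
    obtain ⟨y, rfl⟩ := List.length_eq_one_iff.mp hl
    simpa using hh
  · rintro rfl
    exact ⟨⟨List.isChain_singleton x, rfl⟩, rfl⟩

lemma redFH_succ (x : Ltr) (n : ℕ) :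
    redFH x (n+2) = ((redF (n+1)).filter (fun M => M.head? ≠ some (invL x))).image (x :: ·) := by
  ext L
  simp only [redFH, Finset.mem_filter, Finset.mem_image, mem_redF]
  constructor
  · rintro ⟨⟨hr, hl⟩, hh⟩
    cases L with
    | nil => simp at hl
    | cons y M =>
      simp only [List.head?_cons, Option.some.injEq] at hh
      subst hh
      have hcc := List.isChain_cons.mp hr
      refine ⟨M, ⟨⟨hcc.2, by simpa using hl⟩, ?_⟩, rfl⟩
      intro hcontra
      exact hcc.1 _ (by rw [Option.mem_def]; exact hcontra) rfl
  · rintro ⟨M, ⟨⟨hr, hl⟩, hh⟩, rfl⟩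
    refine ⟨⟨List.isChain_cons.mpr ⟨?_, hr⟩, by simp [hl]⟩, rfl⟩
    intro y hy he
    rw [Option.mem_def] at hy
    exact hh (by rw [hy, he])

lemma counts : ∀ n : ℕ, (∀ x : Ltr, (redFH x (n+1)).card = 3^n) ∧ (redF (n+1)).card = 4 * 3^n := by
  intro n
  induction n with
  | zero =>
    constructor
    · intro x
      show (redFH x 1).card = 3 ^ 0
      rw [redFH_one]; rfl
    · rw [card_redF_succ]
      show (∑ x : Ltr, (redFH x 1).card) = 4 * 3 ^ 0
      simp only [redFH_one, Finset.card_singleton, Finset.sum_const, Finset.card_univ, smul_eq_mul]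
      rfl
  | succ n ih =>
    have hH : ∀ x : Ltr, (redFH x (n+2)).card = 3^(n+1) := by
      intro x
      rw [redFH_succ, Finset.card_image_of_injective _ (fun a b h => by simpa using h)]
      simp only [ne_eq]
      rw [Finset.filter_not, Finset.card_sdiff_of_subset (Finset.filter_subset _ _)]
      have h1 : (redF (n+1)).filter (fun M => M.head? = some (invL x)) = redFH (invL x) (n+1) := rfl
      rw [h1, ih.1, ih.2]
      have h3 : (3:ℕ)^(n+1) = 3 * 3^n := by ring
      omega
    refine ⟨hH, ?_⟩
    rw [card_redF_succ]
    simp only [hH, Finset.sum_const, Finset.card_univ, smul_eq_mul]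
    rfl
lemma counts_done : True := trivial
/-! ### Words avoiding two last letters -/

lemma R_symm {x y : Ltr} (h : y ≠ invL x) : x ≠ invL y := by
  intro he
  exact h (by rw [he]; simp)

lemma isRed_reverse (L : List Ltr) : IsRed L.reverse ↔ IsRed L := by
  rw [IsRed, List.isChain_reverse]
  constructor <;> intro h <;> exact h.imp (fun a b hab => R_symm hab)

def redFL (m : ℕ) (s1 s2 : Ltr) : Finset (List Ltr) :=
  (redF m).filter (fun L => L.getLast? ≠ some s1 ∧ L.getLast? ≠ some s2)

lemma mem_redFL {m : ℕ} {s1 s2 : Ltr} {L : List Ltr} :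
    L ∈ redFL m s1 s2 ↔ (IsRed L ∧ L.length = m) ∧ L.getLast? ≠ some s1 ∧ L.getLast? ≠ some s2 := by
  rw [redFL, Finset.mem_filter, mem_redF]

lemma redFL_zero (s1 s2 : Ltr) : redFL 0 s1 s2 = {[]} := by
  ext L
  rw [mem_redFL]
  simp only [Finset.mem_singleton]
  constructor
  · rintro ⟨⟨-, h⟩, -⟩; exact List.length_eq_zero_iff.mp h
  · rintro rfl
    exact ⟨⟨isRed_nil, rfl⟩, by simp, by simp⟩

lemma card_redFL_succ (n : ℕ) (s1 s2 : Ltr) (hne : s1 ≠ s2) :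
    (redFL (n+1) s1 s2).card = 2 * 3 ^ n := by
  have himg : redFL (n+1) s1 s2 =
      ((redF (n+1)).filter (fun L => L.head? ≠ some s1 ∧ L.head? ≠ some s2)).image List.reverse := by
    ext L
    simp only [mem_redFL, Finset.mem_image, Finset.mem_filter, mem_redF]
    constructor
    · rintro ⟨⟨hr, hl⟩, h1, h2⟩
      refine ⟨L.reverse, ⟨⟨(isRed_reverse L).mpr hr, by simpa using hl⟩, ?_, ?_⟩, by simp⟩
      · rwa [List.head?_reverse]
      · rwa [List.head?_reverse]
    · rintro ⟨M, ⟨⟨hr, hl⟩, h1, h2⟩, rfl⟩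
      refine ⟨⟨(isRed_reverse M).mpr hr, by simpa using hl⟩, ?_, ?_⟩
      · rwa [List.getLast?_reverse]
      · rwa [List.getLast?_reverse]
  rw [himg, Finset.card_image_of_injective _ List.reverse_injective]
  have hsplit : (redF (n+1)).filter (fun L => L.head? ≠ some s1 ∧ L.head? ≠ some s2)
      = redF (n+1) \ ((redF (n+1)).filter (fun L => L.head? = some s1 ∨ L.head? = some s2)) := by
    rw [← Finset.filter_not]
    apply Finset.filter_congr
    intro L _
    simp [not_or]
  rw [hsplit, Finset.card_sdiff_of_subset (Finset.filter_subset _ _), Finset.filter_or]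
  have hd : Disjoint ((redF (n+1)).filter (fun L => L.head? = some s1))
      ((redF (n+1)).filter (fun L => L.head? = some s2)) := by
    simp only [Finset.disjoint_left, Finset.mem_filter]
    rintro L ⟨-, h1⟩ ⟨-, h2⟩
    rw [h1] at h2
    exact hne (by simpa using h2)
  rw [Finset.card_union_of_disjoint hd]
  have e1 : (redF (n+1)).filter (fun L => L.head? = some s1) = redFH s1 (n+1) := rfl
  have e2 : (redF (n+1)).filter (fun L => L.head? = some s2) = redFH s2 (n+1) := rfl
  rw [e1, e2, (counts n).1, (counts n).1, (counts n).2]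
  have : (3:ℕ)^(n+1) = 3 * 3^n := by ring
  omega

def W : ℕ → ℕ
  | 0 => 1
  | m+1 => 2 * 3 ^ m

lemma card_redFL (m : ℕ) (s1 s2 : Ltr) (hne : s1 ≠ s2) : (redFL m s1 s2).card = W m := by
  cases m with
  | zero => rw [redFL_zero]; rfl
  | succ n => rw [card_redFL_succ n s1 s2 hne]; rfl

lemma sumW : ∀ r : ℕ, ∑ m ∈ Finset.range (r+1), W m = 3 ^ r := by
  intro r
  induction r with
  | zero => rfl
  | succ r ih =>
    rw [Finset.sum_range_succ, ih]
    show 3^r + 2 * 3^r = 3^(r+1)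
    ring
/-! ### The finset of bad words -/

def sandw (a : Ltr) (t : Bool) (ℓ : ℕ) (U : List Ltr) : List Ltr :=
  U ++ coreW a t ℓ ++ FreeGroup.invRev U

def coreOK (n ℓ : ℕ) (t : Bool) : Prop :=
  1 ≤ ℓ ∧ (t = true → ℓ % 2 = 0) ∧ ℓ ≤ n ∧ (n - ℓ) % 2 = 0

instance (n ℓ : ℕ) (t : Bool) : Decidable (coreOK n ℓ t) := by
  unfold coreOK; infer_instance

def badF (n : ℕ) : Finset (List Ltr) :=
  (Finset.range (n+1) ×ˢ (Finset.univ : Finset (Ltr × Bool))).biUnion fun p =>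
    if coreOK n p.1 p.2.2 then
      (redFL ((n - p.1)/2) (invL p.2.1) (coreLast p.2.1 p.2.2)).image (sandw p.2.1 p.2.2 p.1)
    else ∅

lemma invRev_append (X Y : List Ltr) :
    FreeGroup.invRev (X ++ Y) = FreeGroup.invRev Y ++ FreeGroup.invRev X := by
  simp [invRev_eq]

lemma invRev_ne_nil {T : List Ltr} (h : T ≠ []) : FreeGroup.invRev T ≠ [] := by
  intro hc
  apply h
  have := congrArg List.length hc
  rw [FreeGroup.invRev_length] at this
  exact List.length_eq_zero_iff.mp this

lemma invRev_getLast?' (T : List Ltr) :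
    (FreeGroup.invRev T).getLast? = T.head?.map invL := by
  rw [invRev_eq, List.getLast?_reverse, List.head?_map]

lemma sandw_length (a : Ltr) (t : Bool) (ℓ : ℕ) (U : List Ltr) :
    (sandw a t ℓ U).length = 2 * U.length + ℓ := by
  simp [sandw, FreeGroup.invRev_length]
  omega

lemma take_len_sandw (a : Ltr) (t : Bool) (ℓ : ℕ) (U : List Ltr) :
    (sandw a t ℓ U).take U.length = U := by
  rw [sandw, List.append_assoc]
  exact List.take_left

lemma sandw_injective (a : Ltr) (t : Bool) (ℓ : ℕ) : Function.Injective (sandw a t ℓ) := by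
  intro U₁ U₂ h
  have hlen : U₁.length = U₂.length := by
    have := congrArg List.length h
    rw [sandw_length, sandw_length] at this
    omega
  rw [← take_len_sandw a t ℓ U₁, ← take_len_sandw a t ℓ U₂, h, hlen]

lemma otherL_ne_self (a : Ltr) : otherL a ≠ a := by revert a; decide

lemma coreW_param_inj {a₁ a₂ : Ltr} {t₁ t₂ : Bool} {ℓ₁ ℓ₂ : ℕ}
    (h₁ : 1 ≤ ℓ₁) (he₁ : t₁ = true → ℓ₁ % 2 = 0) (he₂ : t₂ = true → ℓ₂ % 2 = 0)
    (heq : coreW a₁ t₁ ℓ₁ = coreW a₂ t₂ ℓ₂) : a₁ = a₂ ∧ t₁ = t₂ ∧ ℓ₁ = ℓ₂ := by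
  have hl : ℓ₁ = ℓ₂ := by
    have := congrArg List.length heq
    simpa using this
  subst hl
  have ha : a₁ = a₂ := by
    have := congrArg List.head? heq
    rw [coreW_head? _ _ _ h₁, coreW_head? _ _ _ h₁] at this
    simpa using this
  subst ha
  refine ⟨rfl, ?_, rfl⟩
  cases t₁ <;> cases t₂
  · rfl
  · exfalso
    obtain ⟨m, hm⟩ : ∃ m, ℓ₁ = m + 2 := ⟨ℓ₁ - 2, by have := he₂ rfl; omega⟩
    subst hm
    rw [show coreW a₁ false (m+2) = a₁ :: a₁ :: List.replicate m a₁ from by simp [coreW, List.replicate_succ],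
        show coreW a₁ true (m+2) = a₁ :: otherL a₁ :: altW a₁ m from by simp [coreW, altW_two_step]] at heq
    have : a₁ = otherL a₁ := by
      have := congrArg (fun L => L.tail.head?) heq
      simpa using this
    exact otherL_ne_self a₁ this.symm
  · exfalso
    obtain ⟨m, hm⟩ : ∃ m, ℓ₁ = m + 2 := ⟨ℓ₁ - 2, by have := he₁ rfl; omega⟩
    subst hm
    rw [show coreW a₁ false (m+2) = a₁ :: a₁ :: List.replicate m a₁ from by simp [coreW, List.replicate_succ],
        show coreW a₁ true (m+2) = a₁ :: otherL a₁ :: altW a₁ m from by simp [coreW, altW_two_step]] at heq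
    have : otherL a₁ = a₁ := by
      have := congrArg (fun L => L.tail.head?) heq
      simpa using this
    exact otherL_ne_self a₁ this
  · rfl

lemma sandw_surgery {a₁ a₂ : Ltr} {t₁ t₂ : Bool} {ℓ₁ ℓ₂ : ℕ} {U₁ U₂ : List Ltr}
    (h₁ : 1 ≤ ℓ₁) (he₁ : t₁ = true → ℓ₁ % 2 = 0)
    (hle : U₁.length ≤ U₂.length)
    (heq : sandw a₁ t₁ ℓ₁ U₁ = sandw a₂ t₂ ℓ₂ U₂) : U₁ = U₂ := by
  have htake : U₂.take U₁.length = U₁ := by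
    have e1 : (sandw a₁ t₁ ℓ₁ U₁).take U₁.length = U₁ := take_len_sandw _ _ _ _
    have e2 : (sandw a₂ t₂ ℓ₂ U₂).take U₁.length = U₂.take U₁.length := by
      rw [sandw, List.append_assoc, List.take_append,
        show U₁.length - U₂.length = 0 from by omega, List.take_zero, List.append_nil]
    rw [heq] at e1
    rw [e2] at e1
    exact e1
  set T := U₂.drop U₁.length with hT
  have hU2 : U₂ = U₁ ++ T := by
    conv_lhs => rw [← List.take_append_drop U₁.length U₂]
    rw [htake]
  by_cases hTnil : T = []
  · rw [hU2, hTnil, List.append_nil]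
  · exfalso
    have heq2 : coreW a₁ t₁ ℓ₁ ++ FreeGroup.invRev U₁
        = T ++ (coreW a₂ t₂ ℓ₂ ++ FreeGroup.invRev (U₁ ++ T)) := by
      apply List.append_cancel_left (as := U₁)
      have h' := heq
      rw [sandw, sandw, hU2] at h'
      simpa [List.append_assoc] using h'
    have heq3 : coreW a₁ t₁ ℓ₁ = T ++ coreW a₂ t₂ ℓ₂ ++ FreeGroup.invRev T := by
      apply List.append_cancel_right (bs := FreeGroup.invRev U₁)
      rw [heq2, invRev_append]
      simp [List.append_assoc]
    have hhead : T.head? = some a₁ := by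
      have hh := congrArg List.head? heq3
      rw [coreW_head? _ _ _ h₁, List.append_assoc, List.head?_append_of_ne_nil _ hTnil] at hh
      exact hh.symm
    have hlast : coreLast a₁ t₁ = invL a₁ := by
      have hh := congrArg List.getLast? heq3
      rw [coreW_getLast? _ _ _ h₁ (fun ht => Nat.even_iff.mpr (he₁ ht)),
        List.getLast?_append_of_ne_nil _ (invRev_ne_nil hTnil), invRev_getLast?', hhead] at hh
      simpa using hh
    exact coreLast_ne_invL a₁ t₁ hlast

lemma sandw_inj {a₁ a₂ : Ltr} {t₁ t₂ : Bool} {ℓ₁ ℓ₂ : ℕ} {U₁ U₂ : List Ltr}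
    (h₁ : 1 ≤ ℓ₁) (he₁ : t₁ = true → ℓ₁ % 2 = 0)
    (h₂ : 1 ≤ ℓ₂) (he₂ : t₂ = true → ℓ₂ % 2 = 0)
    (heq : sandw a₁ t₁ ℓ₁ U₁ = sandw a₂ t₂ ℓ₂ U₂) :
    a₁ = a₂ ∧ t₁ = t₂ ∧ ℓ₁ = ℓ₂ ∧ U₁ = U₂ := by
  have hU : U₁ = U₂ := by
    rcases le_total U₁.length U₂.length with h | h
    · exact sandw_surgery h₁ he₁ h heq
    · exact (sandw_surgery h₂ he₂ h heq.symm).symm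
  subst hU
  have hC : coreW a₁ t₁ ℓ₁ = coreW a₂ t₂ ℓ₂ := by
    rw [sandw, sandw] at heq
    have h' : U₁ ++ (coreW a₁ t₁ ℓ₁ ++ FreeGroup.invRev U₁)
        = U₁ ++ (coreW a₂ t₂ ℓ₂ ++ FreeGroup.invRev U₁) := by
      simpa [List.append_assoc] using heq
    have h2 : coreW a₁ t₁ ℓ₁ ++ FreeGroup.invRev U₁
        = coreW a₂ t₂ ℓ₂ ++ FreeGroup.invRev U₁ := List.append_cancel_left h'
    exact List.append_cancel_right h2
  obtain ⟨ha, ht, hl⟩ := coreW_param_inj h₁ he₁ he₂ hC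
  exact ⟨ha, ht, hl, rfl⟩

lemma mem_badF {n : ℕ} {L : List Ltr} : L ∈ badF n ↔
    ∃ (ℓ : ℕ) (a : Ltr) (t : Bool) (U : List Ltr), coreOK n ℓ t ∧
      U ∈ redFL ((n - ℓ)/2) (invL a) (coreLast a t) ∧ L = sandw a t ℓ U := by
  rw [badF, Finset.mem_biUnion]
  constructor
  · rintro ⟨⟨ℓ, a, t⟩, hp, hL⟩
    by_cases hOK : coreOK n ℓ t
    · rw [if_pos hOK, Finset.mem_image] at hL
      obtain ⟨U, hU, rfl⟩ := hL
      exact ⟨ℓ, a, t, U, hOK, hU, rfl⟩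
    · rw [if_neg hOK] at hL
      exact absurd hL (Finset.notMem_empty L)
  · rintro ⟨ℓ, a, t, U, hOK, hU, rfl⟩
    refine ⟨(ℓ, a, t), ?_, ?_⟩
    · rw [Finset.mem_product, Finset.mem_range]
      exact ⟨by have := hOK.2.2.1; omega, Finset.mem_univ _⟩
    · rw [if_pos hOK, Finset.mem_image]
      exact ⟨U, hU, rfl⟩

lemma card_badF (n : ℕ) : (badF n).card =
    ∑ p ∈ Finset.range (n+1) ×ˢ (Finset.univ : Finset (Ltr × Bool)),
      (if coreOK n p.1 p.2.2 then W ((n - p.1)/2) else 0) := by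
  rw [badF, Finset.card_biUnion]
  · apply Finset.sum_congr rfl
    intro p _
    by_cases hOK : coreOK n p.1 p.2.2
    · rw [if_pos hOK, if_pos hOK, Finset.card_image_of_injective _ (sandw_injective _ _ _),
        card_redFL _ _ _ (fun h => coreLast_ne_invL p.2.1 p.2.2 h.symm)]
    · rw [if_neg hOK, if_neg hOK, Finset.card_empty]
  · intro p hp q hq hpq
    simp only [Function.onFun]
    by_cases hOKp : coreOK n p.1 p.2.2
    · by_cases hOKq : coreOK n q.1 q.2.2
      · rw [if_pos hOKp, if_pos hOKq]
        simp only [Finset.disjoint_left, Finset.mem_image]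
        rintro L ⟨U₁, hU₁, rfl⟩ ⟨U₂, hU₂, hL⟩
        obtain ⟨ha, ht, hl, hU⟩ := sandw_inj hOKq.1 hOKq.2.1 hOKp.1 hOKp.2.1 hL
        exact hpq (Prod.ext hl.symm (Prod.ext ha.symm ht.symm))
      · rw [if_neg hOKq]; exact Finset.disjoint_empty_right _
    · rw [if_neg hOKp]; exact Finset.disjoint_empty_left _
/-! ### Evaluating the cardinality of badF -/

lemma coreOK_false_iff (n ℓ : ℕ) :
    coreOK n ℓ false ↔ (1 ≤ ℓ ∧ ℓ ≤ n ∧ (n - ℓ) % 2 = 0) := by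
  unfold coreOK
  constructor
  · rintro ⟨h1, _, h3, h4⟩; exact ⟨h1, h3, h4⟩
  · rintro ⟨h1, h3, h4⟩; exact ⟨h1, by simp, h3, h4⟩

lemma coreOK_true_odd (r ℓ : ℕ) : ¬ coreOK (2*r+1) ℓ true := by
  rintro ⟨h1, h2, h3, h4⟩
  have := h2 rfl
  omega

lemma coreOK_true_even (r ℓ : ℕ) :
    coreOK (2*r+2) ℓ true ↔ (1 ≤ ℓ ∧ ℓ ≤ 2*r+2 ∧ ((2*r+2) - ℓ) % 2 = 0) := by
  unfold coreOK
  constructor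
  · rintro ⟨h1, h2, h3, h4⟩; exact ⟨h1, h3, h4⟩
  · rintro ⟨h1, h3, h4⟩; exact ⟨h1, fun _ => by omega, h3, h4⟩

lemma sum_core (n r : ℕ) (h : n = 2*r+1 ∨ n = 2*r+2) :
    ∑ ℓ ∈ Finset.range (n+1),
      (if 1 ≤ ℓ ∧ ℓ ≤ n ∧ (n - ℓ) % 2 = 0 then W ((n - ℓ)/2) else 0) = 3 ^ r := by
  have himg : ((Finset.range (r+1)).image (fun m => n - 2*m)) ⊆ Finset.range (n+1) := by
    intro ℓ hℓ
    simp only [Finset.mem_image, Finset.mem_range] at hℓ ⊢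
    obtain ⟨m, hm, rfl⟩ := hℓ
    omega
  rw [← Finset.sum_subset himg ?vanish]
  case vanish =>
    intro ℓ hr hni
    rw [if_neg]
    rintro ⟨h1, h2, h3⟩
    apply hni
    simp only [Finset.mem_image, Finset.mem_range]
    exact ⟨(n - ℓ)/2, by omega, by omega⟩
  rw [Finset.sum_image ?inj]
  case inj =>
    intro m₁ h₁ m₂ h₂ he
    simp only [Finset.mem_coe, Finset.mem_range] at h₁ h₂ he
    omega
  rw [← sumW r]
  apply Finset.sum_congr rfl
  intro m hm
  rw [Finset.mem_range] at hm
  rw [if_pos (by omega)]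
  congr 1
  omega

lemma card_badF_odd (r : ℕ) : (badF (2*r+1)).card = 4 * 3 ^ r := by
  rw [card_badF, Finset.sum_product]
  have inner : ∀ ℓ : ℕ, (∑ q : Ltr × Bool, (if coreOK (2*r+1) ℓ q.2 then W (((2*r+1) - ℓ)/2) else 0))
      = 4 * (if 1 ≤ ℓ ∧ ℓ ≤ 2*r+1 ∧ ((2*r+1) - ℓ) % 2 = 0 then W (((2*r+1) - ℓ)/2) else 0) := by
    intro ℓ
    rw [Fintype.sum_prod_type]
    have hb : ∀ a : Ltr, (∑ t : Bool, (if coreOK (2*r+1) ℓ t then W (((2*r+1) - ℓ)/2) else 0))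
        = (if 1 ≤ ℓ ∧ ℓ ≤ 2*r+1 ∧ ((2*r+1) - ℓ) % 2 = 0 then W (((2*r+1) - ℓ)/2) else 0) := by
      intro a
      rw [Fintype.sum_bool, if_neg (coreOK_true_odd r ℓ)]
      rw [show (if coreOK (2*r+1) ℓ false then W (((2*r+1) - ℓ)/2) else 0)
        = (if 1 ≤ ℓ ∧ ℓ ≤ 2*r+1 ∧ ((2*r+1) - ℓ) % 2 = 0 then W (((2*r+1) - ℓ)/2) else 0) from by
          by_cases hc : coreOK (2*r+1) ℓ false
          · rw [if_pos hc, if_pos ((coreOK_false_iff _ _).mp hc)]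
          · rw [if_neg hc, if_neg (fun hh => hc ((coreOK_false_iff _ _).mpr hh))]]
      omega
    rw [Finset.sum_congr rfl (fun a _ => hb a), Finset.sum_const, Finset.card_univ, smul_eq_mul]
    have h4 : Fintype.card Ltr = 4 := by simp
    rw [h4]
  simp only [inner]
  rw [← Finset.mul_sum, sum_core (2*r+1) r (Or.inl rfl)]

lemma card_badF_even (r : ℕ) : (badF (2*r+2)).card = 8 * 3 ^ r := by
  rw [card_badF, Finset.sum_product]
  have inner : ∀ ℓ : ℕ, (∑ q : Ltr × Bool, (if coreOK (2*r+2) ℓ q.2 then W (((2*r+2) - ℓ)/2) else 0))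
      = 8 * (if 1 ≤ ℓ ∧ ℓ ≤ 2*r+2 ∧ ((2*r+2) - ℓ) % 2 = 0 then W (((2*r+2) - ℓ)/2) else 0) := by
    intro ℓ
    rw [Fintype.sum_prod_type]
    have hb : ∀ a : Ltr, (∑ t : Bool, (if coreOK (2*r+2) ℓ t then W (((2*r+2) - ℓ)/2) else 0))
        = 2 * (if 1 ≤ ℓ ∧ ℓ ≤ 2*r+2 ∧ ((2*r+2) - ℓ) % 2 = 0 then W (((2*r+2) - ℓ)/2) else 0) := by
      intro a
      rw [Fintype.sum_bool]
      have e1 : (if coreOK (2*r+2) ℓ true then W (((2*r+2) - ℓ)/2) else 0)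
          = (if 1 ≤ ℓ ∧ ℓ ≤ 2*r+2 ∧ ((2*r+2) - ℓ) % 2 = 0 then W (((2*r+2) - ℓ)/2) else 0) := by
        by_cases hc : coreOK (2*r+2) ℓ true
        · rw [if_pos hc, if_pos ((coreOK_true_even _ _).mp hc)]
        · rw [if_neg hc, if_neg (fun hh => hc ((coreOK_true_even _ _).mpr hh))]
      have e2 : (if coreOK (2*r+2) ℓ false then W (((2*r+2) - ℓ)/2) else 0)
          = (if 1 ≤ ℓ ∧ ℓ ≤ 2*r+2 ∧ ((2*r+2) - ℓ) % 2 = 0 then W (((2*r+2) - ℓ)/2) else 0) := by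
        by_cases hc : coreOK (2*r+2) ℓ false
        · rw [if_pos hc, if_pos ((coreOK_false_iff _ _).mp hc)]
        · rw [if_neg hc, if_neg (fun hh => hc ((coreOK_false_iff _ _).mpr hh))]
      rw [e1, e2]
      omega
    rw [Finset.sum_congr rfl (fun a _ => hb a), Finset.sum_const, Finset.card_univ, smul_eq_mul]
    have h4 : Fintype.card Ltr = 4 := by simp
    rw [h4]
    ring
  simp only [inner]
  rw [← Finset.mul_sum, sum_core (2*r+2) r (Or.inr rfl)]

/-! ### Assembling everything -/

lemma toWord_mem_badF {g : F2} {n : ℕ} (hn : 1 ≤ n) (hnorm : FreeGroup.norm g = n) :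
    Bad g ↔ g.toWord ∈ badF n := by
  constructor
  · intro hb
    have hg1 : g ≠ 1 := by
      rintro rfl
      rw [FreeGroup.norm_one] at hnorm
      omega
    obtain ⟨a, t, ℓ, U, hl, he, hU, hcond, htw⟩ := decomp_of_bad hg1 hb
    have hlen : 2 * U.length + ℓ = n := by
      have h2 := hnorm
      rw [FreeGroup.norm, htw] at h2
      simp only [List.length_append, coreW_length, FreeGroup.invRev_length] at h2
      omega
    rw [mem_badF]
    refine ⟨ℓ, a, t, U, ⟨hl, fun ht => Nat.even_iff.mp (he ht), by omega, by omega⟩, ?_, htw⟩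
    rw [mem_redFL]
    refine ⟨⟨hU, by omega⟩, ?_, ?_⟩
    · intro hcontra
      exact (hcond (invL a) (by rw [Option.mem_def, hcontra])).1 rfl
    · intro hcontra
      exact (hcond (coreLast a t) (by rw [Option.mem_def, hcontra])).2 rfl
  · intro hmem
    obtain ⟨ℓ, a, t, U, hOK, hU, hL⟩ := mem_badF.mp hmem
    rw [mem_redFL] at hU
    apply bad_of_decomp
    refine ⟨a, t, ℓ, U, hOK.1, fun ht => Nat.even_iff.mpr (hOK.2.1 ht), hU.1.1, ?_, hL⟩
    intro x hx
    rw [Option.mem_def] at hx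
    constructor
    · intro he; exact hU.2.1 (by rw [hx, he])
    · intro he; exact hU.2.2 (by rw [hx, he])

lemma badF_subset_redF (n : ℕ) : badF n ⊆ redF n := by
  intro L hL
  obtain ⟨ℓ, a, t, U, hOK, hU, rfl⟩ := mem_badF.mp hL
  rw [mem_redFL] at hU
  rw [mem_redF]
  constructor
  · apply isRed_sandwich U _ hU.1.1 (isRed_coreW a t ℓ) ?_ (coreW_ne_nil a t ℓ hOK.1)
    intro x hx c1 hc1 c2 hc2
    rw [Option.mem_def] at hx hc1 hc2
    rw [coreW_head? _ _ _ hOK.1] at hc1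
    rw [coreW_getLast? _ _ _ hOK.1 (fun ht => Nat.even_iff.mpr (hOK.2.1 ht))] at hc2
    obtain rfl : a = c1 := by simpa using hc1
    obtain rfl : coreLast a t = c2 := by simpa using hc2
    constructor
    · intro he; exact hU.2.1 (by rw [hx, he])
    · intro he; exact hU.2.2 (by rw [hx, he])
  · rw [sandw_length, hU.1.2]
    have := hOK.2.2.1
    have := hOK.2.2.2
    omega

lemma good_eq_image (n : ℕ) (hn : 1 ≤ n) :
    {g : F2 | FreeGroup.norm g = n ∧ ¬ Bad g} = FreeGroup.mk '' ↑(redF n \ badF n) := by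
  ext g
  simp only [Set.mem_setOf_eq, Set.mem_image, Finset.coe_sdiff, Set.mem_diff,
    Finset.mem_coe]
  constructor
  · rintro ⟨hnorm, hb⟩
    refine ⟨g.toWord, ⟨?_, ?_⟩, FreeGroup.mk_toWord⟩
    · rw [mem_redF]; exact ⟨isRed_toWord g, hnorm⟩
    · intro hc; exact hb ((toWord_mem_badF hn hnorm).mpr hc)
  · rintro ⟨L, ⟨hLred, hLbad⟩, rfl⟩
    have hred : IsRed L := (mem_redF n L |>.mp hLred).1
    have hnorm : FreeGroup.norm (FreeGroup.mk L) = n := by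
      rw [norm_mk_self hred]
      exact ((mem_redF n L).mp hLred).2
    refine ⟨hnorm, fun hb => hLbad ?_⟩
    have hw := (toWord_mem_badF hn hnorm).mp hb
    rwa [toWord_mk_self hred] at hw

lemma pACount_eq (n : ℕ) (hn : 1 ≤ n) :
    pACount n = (redF n).card - (badF n).card := by
  have h0 : pACount n = Nat.card {g : F2 | FreeGroup.norm g = n ∧ ¬ Bad g} := rfl
  rw [h0, good_eq_image n hn, Nat.card_coe_set_eq,
    Set.ncard_image_of_injOn ?inj, Set.ncard_coe_finset,
    Finset.card_sdiff_of_subset (badF_subset_redF n)]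
  case inj =>
    intro L₁ h₁ L₂ h₂ he
    rw [Finset.coe_sdiff, Set.mem_diff, Finset.mem_coe, mem_redF] at h₁ h₂
    rw [← toWord_mk_self h₁.1.1, ← toWord_mk_self h₂.1.1, he]

end PA

/-- The number of pseudo-Anosov-type elements of word length `2r+2` is
`4·3^r·(3^(r+1) − 2)`, and of word length `2r+1` (with `r ≥ 1`) is
`4·3^r·(3^r − 1)`. -/
theorem pACount_formula :
    (∀ r : ℕ, pACount (2 * r + 2) = 4 * 3 ^ r * (3 ^ (r + 1) - 2)) ∧
    (∀ r : ℕ, 1 ≤ r → pACount (2 * r + 1) = 4 * 3 ^ r * (3 ^ r - 1)) := by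
  constructor
  · intro r
    rw [PA.pACount_eq (2*r+2) (by omega)]
    rw [show 2*r+2 = (2*r+1)+1 from rfl, (PA.counts (2*r+1)).2, PA.card_badF_even r]
    have e1 : 4 * 3^(2*r+1) = 4 * 3^r * 3^(r+1) := by
      rw [mul_assoc, ← pow_add]
      congr 2
      omega
    have e2 : 4 * 3^r * (3^(r+1) - 2) = 4 * 3^r * 3^(r+1) - 4 * 3^r * 2 := by
      rw [Nat.mul_sub]
    rw [e1, e2]
    have : 4 * 3^r * 2 = 8 * 3^r := by ring
    omega
  · intro r hr
    rw [PA.pACount_eq (2*r+1) (by omega)]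
    rw [show 2*r+1 = (2*r)+1 from rfl, (PA.counts (2*r)).2, PA.card_badF_odd r]
    have e1 : 4 * 3^(2*r) = 4 * 3^r * 3^r := by
      rw [mul_assoc, ← pow_add]
      congr 2
      omega
    have e2 : 4 * 3^r * (3^r - 1) = 4 * 3^r * 3^r - 4 * 3^r * 1 := by
      rw [Nat.mul_sub]
    rw [e1, e2]
    omega
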